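/- Let R be a PID that is not a field. The set of prime elements 𝒫 is dense in R∖({0} ∪ U(R)) with the subspace topology induced from the Macías topology; in fact R∖({0} ∪ U(R)) equals the union of the sets ⟨p⟩∖{0} over all primes p. -/

import Mathlib

def sigmaSet {R : Type*} [CommRing R] (r : R) : Set R :=
  {s | Ideal.span {r} ⊔ Ideal.span {s} = ⊤}

/-- Macías-open sets are closed under passing to divisors. -/
lemma macias_open_divisor_closed {R : Type*} [CommRing R] [IsDomain R]
    [IsPrincipalIdealRing R] (V : Set {x : R // x ≠ 0})
    (hV : TopologicalSpace.GenerateOpen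
        {S : Set {x : R // x ≠ 0} | ∃ k : R, k ≠ 0 ∧
          S = {x : {r : R // r ≠ 0} | (x : R) ∈ sigmaSet k}} V)
    (x y : {r : R // r ≠ 0}) (hx : x ∈ V)
    (hdvd : (x : R) ∈ Ideal.span {(y : R)}) : y ∈ V := by
  induction hV with
  | basic S hS =>
      obtain ⟨k, -, rfl⟩ := hS
      have hxk : Ideal.span {k} ⊔ Ideal.span {(x : R)} = ⊤ := hx
      have hle : Ideal.span {(x : R)} ≤ Ideal.span {(y : R)} :=
        Ideal.span_le.mpr (by simpa using hdvd)
      have : (⊤ : Ideal R) ≤ Ideal.span {k} ⊔ Ideal.span {(y : R)} := by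
        rw [← hxk]; exact sup_le_sup_left hle _
      exact top_le_iff.mp this
  | univ => trivial
  | inter S T _ _ ihS ihT => exact ⟨ihS hx.1, ihT hx.2⟩
  | sUnion 𝒮 _ ih =>
      obtain ⟨S, hS, hxS⟩ := hx
      exact ⟨S, hS, ih S hS hxS⟩

/-- In a PID that is not a field, the primes are dense in R∖({0} ∪ U(R)) with the
subspace topology from M(R); moreover R∖({0} ∪ U(R)) = ⋃_{p prime} (⟨p⟩ ∖ {0}). -/
theorem primes_dense_in_nonunits (R : Type*) [CommRing R] [IsDomain R]
    [IsPrincipalIdealRing R] (hf : ¬ IsField R) :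
    letI tM : TopologicalSpace {x : R // x ≠ 0} :=
      TopologicalSpace.generateFrom
        {S : Set {x : R // x ≠ 0} | ∃ k : R, k ≠ 0 ∧
          S = {x : {r : R // r ≠ 0} | (x : R) ∈ sigmaSet k}}
    letI : TopologicalSpace {x : R // x ≠ 0 ∧ ¬ IsUnit x} :=
      TopologicalSpace.induced
        (fun x : {r : R // r ≠ 0 ∧ ¬ IsUnit r} => (⟨x.1, x.2.1⟩ : {r : R // r ≠ 0})) tM
    (Dense {x : {r : R // r ≠ 0 ∧ ¬ IsUnit r} | Prime (x : R)} ∧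
      {x : R | x ≠ 0 ∧ ¬ IsUnit x} =
        ⋃ p ∈ {p : R | Prime p}, (((Ideal.span {p} : Ideal R) : Set R) \ {0})) := by
  -- a prime factor exists for any nonzero nonunit
  have factor : ∀ x : R, x ≠ 0 → ¬ IsUnit x → ∃ p : R, Prime p ∧ p ∣ x := by
    intro x hx0 hxu
    obtain ⟨i, hi, hdvd⟩ := WfDvdMonoid.exists_irreducible_factor hxu hx0
    exact ⟨i, hi.prime, hdvd⟩
  letI tM : TopologicalSpace {x : R // x ≠ 0} :=
    TopologicalSpace.generateFrom
      {S : Set {x : R // x ≠ 0} | ∃ k : R, k ≠ 0 ∧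
        S = {x : {r : R // r ≠ 0} | (x : R) ∈ sigmaSet k}}
  letI tI : TopologicalSpace {x : R // x ≠ 0 ∧ ¬ IsUnit x} :=
    TopologicalSpace.induced
      (fun x : {r : R // r ≠ 0 ∧ ¬ IsUnit r} => (⟨x.1, x.2.1⟩ : {r : R // r ≠ 0})) tM
  constructor
  · -- density
    rw [@dense_iff_inter_open _ tI]
    rintro U hU ⟨x, hxU⟩
    obtain ⟨V, hV, rfl⟩ := hU
    obtain ⟨p, hp, hpdvd⟩ := factor x.1 x.2.1 x.2.2
    have hp0 : p ≠ 0 := hp.ne_zero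
    have hpu : ¬ IsUnit p := hp.not_unit
    refine ⟨⟨p, hp0, hpu⟩, ?_, hp⟩
    exact macias_open_divisor_closed V hV ⟨x.1, x.2.1⟩ ⟨p, hp0⟩ hxU
      (Ideal.mem_span_singleton.mpr hpdvd)
  · -- the set equality
    ext x
    simp only [Set.mem_setOf_eq, Set.mem_iUnion, Set.mem_diff, SetLike.mem_coe,
      Set.mem_singleton_iff]
    constructor
    · rintro ⟨hx0, hxu⟩
      obtain ⟨p, hp, hpdvd⟩ := factor x hx0 hxu
      exact ⟨p, hp, Ideal.mem_span_singleton.mpr hpdvd, hx0⟩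
    · rintro ⟨p, hp, hxp, hx0⟩
      refine ⟨hx0, fun hu => hp.not_unit ?_⟩
      exact isUnit_of_dvd_unit (Ideal.mem_span_singleton.mp hxp) hu
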